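/- arXiv:2105.14532 — 5 statements merged into one kernel-verified Lean document; each statement's English description precedes it below -/
import Mathlib

section
/- Over the rational function field ℚ(z), the quadratic polynomial R_5(X, -(z^2+4)/(z+11)) in X factors as (X + (z^2+12z+16)^3/(z+11)) · (X + (z^2-228z+496)^3/(z+11)^5). -/
open Polynomial

/-- Over `ℚ(z)`, the quadratic polynomial `R_5(X, -(z^2+4)/(z+11))` in `X` factors as
`(X + (z^2+12z+16)^3/(z+11)) * (X + (z^2-228z+496)^3/(z+11)^5)`. -/
theorem R5_factorization :
    let z : RatFunc ℚ := RatFunc.X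
    let Y : RatFunc ℚ := -(z ^ 2 + 4) / (z + 11)
    (X ^ 2
        - C (Y ^ 5 - 80 * Y ^ 4 + 1890 * Y ^ 3 - 12600 * Y ^ 2 + 7776 * Y + 3456) * X
        + C ((Y ^ 2 + 216 * Y + 144) ^ 3) : Polynomial (RatFunc ℚ))
      = (X + C ((z ^ 2 + 12 * z + 16) ^ 3 / (z + 11)))
          * (X + C ((z ^ 2 - 228 * z + 496) ^ 3 / (z + 11) ^ 5)) := by
  intro z Y
  have hz : (z + 11 : RatFunc ℚ) ≠ 0 := by
    have h0 : (Polynomial.X + 11 : ℚ[X]) ≠ 0 := by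
      intro h
      have := congrArg (Polynomial.eval 0) h
      simp at this
    have hrw : (z + 11 : RatFunc ℚ) = algebraMap ℚ[X] (RatFunc ℚ) (Polynomial.X + 11) := by
      rw [map_add, RatFunc.algebraMap_X, map_ofNat]
    rw [hrw]
    exact RatFunc.algebraMap_ne_zero h0
  have hY : Y * (z + 11) = -(z ^ 2 + 4) := div_mul_cancel₀ _ hz
  have h1 : (z ^ 2 + 12 * z + 16) ^ 3 / (z + 11)
      + (z ^ 2 - 228 * z + 496) ^ 3 / (z + 11) ^ 5
      = -(Y ^ 5 - 80 * Y ^ 4 + 1890 * Y ^ 3 - 12600 * Y ^ 2 + 7776 * Y + 3456) := by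
    rw [div_add_div _ _ hz (pow_ne_zero 5 hz),
      div_eq_iff (by exact mul_ne_zero hz (pow_ne_zero 5 hz))]
    have e : -(Y ^ 5 - 80 * Y ^ 4 + 1890 * Y ^ 3 - 12600 * Y ^ 2 + 7776 * Y + 3456)
          * ((z + 11) * (z + 11) ^ 5)
        = -((Y * (z + 11)) ^ 5 * (z + 11) - 80 * (Y * (z + 11)) ^ 4 * (z + 11) ^ 2
          + 1890 * (Y * (z + 11)) ^ 3 * (z + 11) ^ 3 - 12600 * (Y * (z + 11)) ^ 2 * (z + 11) ^ 4
          + 7776 * (Y * (z + 11)) * (z + 11) ^ 5 + 3456 * (z + 11) ^ 6) := by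
      ring
    rw [e, hY]; ring
  have h2 : (z ^ 2 + 12 * z + 16) ^ 3 / (z + 11)
      * ((z ^ 2 - 228 * z + 496) ^ 3 / (z + 11) ^ 5)
      = (Y ^ 2 + 216 * Y + 144) ^ 3 := by
    rw [div_mul_div_comm, div_eq_iff (by exact mul_ne_zero hz (pow_ne_zero 5 hz))]
    have e : (Y ^ 2 + 216 * Y + 144) ^ 3 * ((z + 11) * (z + 11) ^ 5)
        = ((Y * (z + 11)) ^ 2 + 216 * (Y * (z + 11)) * (z + 11) + 144 * (z + 11) ^ 2) ^ 3 := by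
      ring
    rw [e, hY]; ring
  have h1' : Y ^ 5 - 80 * Y ^ 4 + 1890 * Y ^ 3 - 12600 * Y ^ 2 + 7776 * Y + 3456
      = -((z ^ 2 + 12 * z + 16) ^ 3 / (z + 11)
        + (z ^ 2 - 228 * z + 496) ^ 3 / (z + 11) ^ 5) := by
    rw [h1]; ring
  rw [h1', ← h2, map_neg, map_add, map_mul]
  ring
end

section
/- The algebraic number j = -32^3 · 3^3 · √5 · ((69 + 31√5)/2)^3 is a root of X^2 + 654403829760X + 5209253090426880, and this polynomial is irreducible over ℚ. -/
open Polynomial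

/-- The algebraic number `j = -32^3 · 3^3 · √5 · ((69 + 31√5)/2)^3` is a root of
`X^2 + 654403829760 X + 5209253090426880 = H_{-75}(X)`, and this polynomial is
irreducible over `ℚ`. -/
theorem H75_root_and_irreducible :
    ((-(32 ^ 3) * 3 ^ 3 * Real.sqrt 5 * ((69 + 31 * Real.sqrt 5) / 2) ^ 3) ^ 2
        + 654403829760 * (-(32 ^ 3) * 3 ^ 3 * Real.sqrt 5 * ((69 + 31 * Real.sqrt 5) / 2) ^ 3)
        + 5209253090426880 = 0) ∧
    Irreducible (X ^ 2 + 654403829760 * X + 5209253090426880 : Polynomial ℚ) := by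
  constructor
  · have hs : Real.sqrt 5 ^ 2 = 5 := Real.sq_sqrt (by norm_num)
    linear_combination (-1041850618085376 + 4754959391282750816256 * Real.sqrt 5
      + 6144877530365495869440 * Real.sqrt 5 ^ 2 + 3118734216755203276800 * Real.sqrt 5 ^ 3
      + 860920687898583367680 * Real.sqrt 5 ^ 4 + 144962688382188650496 * Real.sqrt 5 ^ 5
      + 10854694057603497984 * Real.sqrt 5 ^ 6) * hs
  · set p : Polynomial ℚ := X ^ 2 + 654403829760 * X + 5209253090426880 with hp
    have hdeg : p.natDegree = 2 := by unfold p; compute_degree!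
    rw [irreducible_iff_roots_eq_zero_of_degree_le_three (by omega) (by omega)]
    have hp0 : p ≠ 0 := by
      intro h
      rw [h] at hdeg
      simp at hdeg
    rw [Multiset.eq_zero_iff_forall_notMem]
    intro r hr
    rw [mem_roots hp0] at hr
    have hroot : r ^ 2 + 654403829760 * r + 5209253090426880 = 0 := by
      have := hr
      simp [hp, IsRoot, eval_add, eval_mul, eval_pow] at this
      linarith [this]
    -- (2r + b)^2 = 5 * k^2 with k = 292658282496
    have hsq : (2 * r + 654403829760) ^ 2 = 5 * 292658282496 ^ 2 := by ring_nf; linarith [hroot]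
    have h5 : Irrational (Real.sqrt 5) := by
      simpa using Nat.Prime.irrational_sqrt (p := 5) (by norm_num)
    have hq : (((2 * r + 654403829760) / 292658282496 : ℚ) : ℝ) ^ 2 = 5 := by
      push_cast
      rw [div_pow]
      rw [show ((2:ℝ) * (r:ℝ) + 654403829760) ^ 2 = ((( (2 * r + 654403829760) ^ 2 : ℚ)) : ℝ) by push_cast; ring]
      rw [hsq]
      push_cast
      norm_num
    have : Real.sqrt 5 = |(((2 * r + 654403829760) / 292658282496 : ℚ) : ℝ)| := by
      rw [← Real.sqrt_sq_eq_abs, hq]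
    exact h5 (by rw [this]; exact ⟨|((2 * r + 654403829760) / 292658282496 : ℚ)|, by push_cast; ring⟩)
end

section
/- With z = (8d^3 - 15d^2 - 9d + 8)/(d^3 - 8d^2 + 5d + 1) in the rational function field ℚ(d), the identity (z^2-3z+9)(z^2+229z+505)^3/(z-8)^7 = (d^2-d+1)^3 (d^6-11d^5+30d^4-15d^3-10d^2+5d+1)^3 / ((d^3-8d^2+5d+1)(d-1)^7 d^7) holds. -/
lemma ratfunc_poly_ne_zero (p : Polynomial ℚ) (a : ℚ) (h : Polynomial.eval a p ≠ 0) :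
    (algebraMap (Polynomial ℚ) (RatFunc ℚ)) p ≠ 0 := by
  apply RatFunc.algebraMap_ne_zero
  intro hp
  exact h (by rw [hp]; simp)

/-- With `z = (8d^3 - 15d^2 - 9d + 8)/(d^3 - 8d^2 + 5d + 1)` in `ℚ(d)`, one has
`(z^2-3z+9)(z^2+229z+505)^3/(z-8)^7
  = (d^2-d+1)^3 (d^6-11d^5+30d^4-15d^3-10d^2+5d+1)^3 / ((d^3-8d^2+5d+1)(d-1)^7 d^7)`,
which is the `j`-invariant of the Tate normal form for a point of order 7. -/
theorem j7_identity :
    let d : RatFunc ℚ := RatFunc.X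
    let z : RatFunc ℚ := (8 * d ^ 3 - 15 * d ^ 2 - 9 * d + 8) / (d ^ 3 - 8 * d ^ 2 + 5 * d + 1)
    (z ^ 2 - 3 * z + 9) * (z ^ 2 + 229 * z + 505) ^ 3 / (z - 8) ^ 7
      = (d ^ 2 - d + 1) ^ 3
          * (d ^ 6 - 11 * d ^ 5 + 30 * d ^ 4 - 15 * d ^ 3 - 10 * d ^ 2 + 5 * d + 1) ^ 3
          / ((d ^ 3 - 8 * d ^ 2 + 5 * d + 1) * (d - 1) ^ 7 * d ^ 7) := by
  intro d z
  have hX : d = algebraMap (Polynomial ℚ) (RatFunc ℚ) Polynomial.X := rfl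
  have hd : d ≠ 0 := by
    rw [hX]; exact ratfunc_poly_ne_zero _ 1 (by simp)
  have h1 : d - 1 ≠ 0 := by
    have : d - 1 = algebraMap (Polynomial ℚ) (RatFunc ℚ) (Polynomial.X - 1) := by
      rw [hX]; push_cast [map_sub, map_one]; ring
    rw [this]; exact ratfunc_poly_ne_zero _ 0 (by simp)
  have hB : d ^ 3 - 8 * d ^ 2 + 5 * d + 1 ≠ 0 := by
    have : d ^ 3 - 8 * d ^ 2 + 5 * d + 1 =
        algebraMap (Polynomial ℚ) (RatFunc ℚ)
          (Polynomial.X ^ 3 - 8 * Polynomial.X ^ 2 + 5 * Polynomial.X + 1) := by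
      rw [hX]; push_cast [map_add, map_sub, map_mul, map_pow, map_one, map_ofNat]; ring
    rw [this]; exact ratfunc_poly_ne_zero _ 0 (by norm_num)
  have hz8 : z - 8 = 49 * d * (d - 1) / (d ^ 3 - 8 * d ^ 2 + 5 * d + 1) := by
    show (8 * d ^ 3 - 15 * d ^ 2 - 9 * d + 8) / (d ^ 3 - 8 * d ^ 2 + 5 * d + 1) - 8 = _
    rw [div_sub' hB, div_left_inj' hB]
    ring
  have hz8' : z - 8 ≠ 0 := by
    rw [hz8]
    have hnum : (49 : RatFunc ℚ) * d * (d - 1) =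
        algebraMap (Polynomial ℚ) (RatFunc ℚ) (49 * Polynomial.X * (Polynomial.X - 1)) := by
      rw [hX]; push_cast [map_mul, map_sub, map_one, map_ofNat]; ring
    rw [hnum]
    exact div_ne_zero (ratfunc_poly_ne_zero _ 2 (by norm_num)) hB
  show (z ^ 2 - 3 * z + 9) * (z ^ 2 + 229 * z + 505) ^ 3 / (z - 8) ^ 7 = _
  rw [div_eq_div_iff (pow_ne_zero 7 hz8') (mul_ne_zero (mul_ne_zero hB (pow_ne_zero 7 h1)) (pow_ne_zero 7 hd))]
  rw [hz8]
  show ((((8 * d ^ 3 - 15 * d ^ 2 - 9 * d + 8) / (d ^ 3 - 8 * d ^ 2 + 5 * d + 1)) ^ 2 -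
      3 * ((8 * d ^ 3 - 15 * d ^ 2 - 9 * d + 8) / (d ^ 3 - 8 * d ^ 2 + 5 * d + 1)) + 9) *
      (((8 * d ^ 3 - 15 * d ^ 2 - 9 * d + 8) / (d ^ 3 - 8 * d ^ 2 + 5 * d + 1)) ^ 2 +
      229 * ((8 * d ^ 3 - 15 * d ^ 2 - 9 * d + 8) / (d ^ 3 - 8 * d ^ 2 + 5 * d + 1)) + 505) ^ 3) *
      _ = _
  generalize hBB : d ^ 3 - 8 * d ^ 2 + 5 * d + 1 = B at hB ⊢
  field_simp
  subst hBB
  ring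
end

section
/- Over ℚ(z), the quadratic R_2(X, 16(z+1)^4/(z(z-1)^2)) in X factors as (X - 256(z^2-z+1)^3/(z^2(z-1)^2)) · (X - 16(z^2+14z+1)^3/(z(z-1)^4)). -/
open Polynomial

/-- Over `ℚ(z)`, `R_2(X, 16(z+1)^4/(z(z-1)^2))` factors as
`(X - 256(z^2-z+1)^3/(z^2(z-1)^2)) * (X - 16(z^2+14z+1)^3/(z(z-1)^4))`. -/
theorem R2_factorization :
    let z : RatFunc ℚ := RatFunc.X
    let Y : RatFunc ℚ := 16 * (z + 1) ^ 4 / (z * (z - 1) ^ 2)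
    (X ^ 2 - C (Y ^ 2 - 207 * Y + 3456) * X + C ((Y + 144) ^ 3) : Polynomial (RatFunc ℚ))
      = (X - C (256 * (z ^ 2 - z + 1) ^ 3 / (z ^ 2 * (z - 1) ^ 2)))
          * (X - C (16 * (z ^ 2 + 14 * z + 1) ^ 3 / (z * (z - 1) ^ 4))) := by
  intro z Y
  have hz : z ≠ 0 := RatFunc.X_ne_zero
  have hz1 : z - 1 ≠ 0 := by
    have h : z - 1 = algebraMap (Polynomial ℚ) (RatFunc ℚ) (Polynomial.X - 1) := by
      rw [show z = RatFunc.X from rfl, RatFunc.X]; push_cast [map_sub, map_one]; rfl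
    rw [h]
    refine RatFunc.algebraMap_ne_zero ?_
    intro h2
    have := congrArg (Polynomial.eval 2) h2
    norm_num at this
  have hY : Y = 16 * (z + 1) ^ 4 / (z * (z - 1) ^ 2) := rfl
  set a : RatFunc ℚ := 256 * (z ^ 2 - z + 1) ^ 3 / (z ^ 2 * (z - 1) ^ 2) with ha
  set b : RatFunc ℚ := 16 * (z ^ 2 + 14 * z + 1) ^ 3 / (z * (z - 1) ^ 4) with hb
  have h1 : Y ^ 2 - 207 * Y + 3456 = a + b := by
    rw [hY, ha, hb]
    field_simp
    ring
  have h2 : (Y + 144) ^ 3 = a * b := by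
    rw [hY, ha, hb]
    field_simp
    ring
  rw [h1, h2, map_add, map_mul]
  ring
end

section
/- Over the rational function field ℚ(z), R_3(X, z^6/(z^3-27)) factors as (X - z^3(z^3-24)^3/(z^3-27)) · (X - z^3(z^3+216)^3/(z^3-27)^3). -/
open Polynomial

/-- Over `ℚ(z)`, `R_3(X, z^6/(z^3-27))` factors as
`(X - z^3(z^3-24)^3/(z^3-27)) * (X - z^3(z^3+216)^3/(z^3-27)^3)`. -/
theorem R3_factorization :
    let z : RatFunc ℚ := RatFunc.X
    let Y : RatFunc ℚ := z ^ 6 / (z ^ 3 - 27)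
    (X ^ 2 - C (Y * (Y ^ 2 - 126 * Y + 2944)) * X + C (Y * (Y + 192) ^ 3)
        : Polynomial (RatFunc ℚ))
      = (X - C (z ^ 3 * (z ^ 3 - 24) ^ 3 / (z ^ 3 - 27)))
          * (X - C (z ^ 3 * (z ^ 3 + 216) ^ 3 / (z ^ 3 - 27) ^ 3)) := by
  intro z Y
  have hz : (z ^ 3 - 27 : RatFunc ℚ) ≠ 0 := by
    have : (z ^ 3 - 27 : RatFunc ℚ) =
        algebraMap (Polynomial ℚ) (RatFunc ℚ) (Polynomial.X ^ 3 - 27) := by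
      simp [z, RatFunc.algebraMap_X, map_pow, map_sub, map_ofNat]
    rw [this]
    apply RatFunc.algebraMap_ne_zero
    intro h
    have := congrArg (Polynomial.eval 0) h
    norm_num at this
  set A : RatFunc ℚ := z ^ 3 * (z ^ 3 - 24) ^ 3 / (z ^ 3 - 27) with hA
  set B : RatFunc ℚ := z ^ 3 * (z ^ 3 + 216) ^ 3 / (z ^ 3 - 27) ^ 3 with hB
  have h1 : Y * (Y ^ 2 - 126 * Y + 2944) = A + B := by
    simp only [hA, hB, Y]
    field_simp
    ring
  have h2 : Y * (Y + 192) ^ 3 = A * B := by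
    simp only [hA, hB, Y]
    field_simp
    ring
  rw [h1, h2, map_add, map_mul]
  ring
end
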